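/- Define the Minimum Bounding Box mechanism for two agents in the Euclidean plane: given reports x₁ = (a₁,b₁), x₂ = (a₂,b₂) ∈ ℝ² and a prediction F* = (a_F, b_F) ∈ ℝ² of the optimal facility location, output the point y whose first coordinate is a_F clamped to [min(a₁,a₂), max(a₁,a₂)] and whose second coordinate is b_F clamped to [min(b₁,b₂), max(b₁,b₂)]. Then (i) for all x₁, x₂, F*, the egalitarian social cost satisfies max(‖y−x₁‖, ‖y−x₂‖) ≤ ‖x₁−x₂‖ = 2·opt(x₁,x₂), and (ii) if F* = (x₁+x₂)/2 (the prediction is accurate), then y = F* and the cost equals opt(x₁,x₂). That is, the mechanism is 1-consistent and 2-robust for two-agent instances. -/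
import Mathlib


/-- A point of the Euclidean plane from its two coordinates. -/
noncomputable def pt (a b : ℝ) : EuclideanSpace ℝ (Fin 2) :=
  (WithLp.equiv 2 (Fin 2 → ℝ)).symm ![a, b]

/-- The Minimum Bounding Box mechanism for two agents in the Euclidean plane: given the
reports `x₁, x₂` and a prediction `F` of the optimal facility location, it outputs the
point whose each coordinate is the corresponding coordinate of `F` clamped to the
interval spanned by the corresponding coordinates of the two reports. -/
noncomputable def minBoundingBox (x₁ x₂ F : EuclideanSpace ℝ (Fin 2)) :
    EuclideanSpace ℝ (Fin 2) :=
  pt (max (min (x₁ 0) (x₂ 0)) (min (max (x₁ 0) (x₂ 0)) (F 0)))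
     (max (min (x₁ 1) (x₂ 1)) (min (max (x₁ 1) (x₂ 1)) (F 1)))

lemma clamp_sq_le (a b t : ℝ) :
    (max (min a b) (min (max a b) t) - a) ^ 2 ≤ (a - b) ^ 2 ∧
    (max (min a b) (min (max a b) t) - b) ^ 2 ≤ (a - b) ^ 2 := by
  set c := max (min a b) (min (max a b) t) with hc
  have hlo : min a b ≤ c := le_max_left _ _
  have hhi : c ≤ max a b := max_le min_le_max (min_le_left _ _)
  rcases le_total a b with h | h
  · rw [min_eq_left h] at hlo; rw [max_eq_right h] at hhi
    constructor <;> nlinarith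
  · rw [min_eq_right h] at hlo; rw [max_eq_left h] at hhi
    constructor <;> nlinarith

lemma dist_pt (a b : ℝ) (x : EuclideanSpace ℝ (Fin 2)) :
    dist (pt a b) x = Real.sqrt ((a - x 0) ^ 2 + (b - x 1) ^ 2) := by
  rw [EuclideanSpace.dist_eq, Fin.sum_univ_two]
  congr 1 <;> simp [pt, Real.dist_eq, sq_abs]

/-- the Minimum Bounding Box mechanism is 1-consistent and 2-robust for
two-agent instances in the Euclidean plane: (i) its egalitarian social cost is always at
most `‖x₁-x₂‖ = 2·opt(x₁,x₂)`, and (ii) if the prediction is accurate (it equals the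
midpoint `(x₁+x₂)/2`), the output is the prediction itself and the cost equals
`opt(x₁,x₂) = ‖x₁-x₂‖/2`. -/
theorem stmt14 (x₁ x₂ F : EuclideanSpace ℝ (Fin 2)) :
    max (dist (minBoundingBox x₁ x₂ F) x₁) (dist (minBoundingBox x₁ x₂ F) x₂)
      ≤ dist x₁ x₂ ∧
    (F = midpoint ℝ x₁ x₂ →
      minBoundingBox x₁ x₂ F = F ∧
      max (dist (minBoundingBox x₁ x₂ F) x₁) (dist (minBoundingBox x₁ x₂ F) x₂)
        = dist x₁ x₂ / 2) := by
  have hd12 : dist x₁ x₂ = Real.sqrt ((x₁ 0 - x₂ 0) ^ 2 + (x₁ 1 - x₂ 1) ^ 2) := by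
    rw [EuclideanSpace.dist_eq, Fin.sum_univ_two]
    congr 1 <;> simp [Real.dist_eq, sq_abs]
  obtain ⟨h01, h02⟩ := clamp_sq_le (x₁ 0) (x₂ 0) (F 0)
  obtain ⟨h11, h12⟩ := clamp_sq_le (x₁ 1) (x₂ 1) (F 1)
  constructor
  · apply max_le
    · rw [minBoundingBox, dist_pt, hd12]
      exact Real.sqrt_le_sqrt (by nlinarith)
    · rw [minBoundingBox, dist_pt, hd12]
      have : (x₁ 0 - x₂ 0) ^ 2 = (x₂ 0 - x₁ 0) ^ 2 := by ring
      exact Real.sqrt_le_sqrt (by nlinarith)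
  · intro hF
    have hF0 : F 0 = (x₁ 0 + x₂ 0) / 2 := by
      rw [hF, midpoint_eq_smul_add]
      simp [PiLp.smul_apply, PiLp.add_apply]; ring
    have hF1 : F 1 = (x₁ 1 + x₂ 1) / 2 := by
      rw [hF, midpoint_eq_smul_add]
      simp [PiLp.smul_apply, PiLp.add_apply]; ring
    have hy : minBoundingBox x₁ x₂ F = F := by
      have c0 : max (min (x₁ 0) (x₂ 0)) (min (max (x₁ 0) (x₂ 0)) (F 0)) = F 0 := by
        rw [hF0]
        rcases le_total (x₁ 0) (x₂ 0) with h | h <;>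
          rw [min_def, max_def, min_def, max_def] <;> split_ifs <;> linarith
      have c1 : max (min (x₁ 1) (x₂ 1)) (min (max (x₁ 1) (x₂ 1)) (F 1)) = F 1 := by
        rw [hF1]
        rcases le_total (x₁ 1) (x₂ 1) with h | h <;>
          rw [min_def, max_def, min_def, max_def] <;> split_ifs <;> linarith
      rw [minBoundingBox, c0, c1]
      apply PiLp.ext
      intro i
      fin_cases i <;> simp [pt]
    refine ⟨hy, ?_⟩
    rw [hy, hF, dist_midpoint_left, dist_midpoint_right]
    rw [max_self]
    norm_num
    ring
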